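/- Let $D \subset \mathbb{R}^3$ be a nonempty bounded open set, $p, p' \in \mathbb{R}^3 \setminus \overline{D}$, and let $c = \min_{x \in \partial D}(|p-x| + |x-p'|)$. Fix $s > 0$, let $\omega \in S^2$, and set $s(\omega) = \frac{c^2 - |p-p'|^2}{2(c - \omega\cdot(p-p'))}$, assuming $c > |p-p'|$ and $s < s(\omega)$. If the point $p' + s(\omega)\omega$ belongs to $\partial D$, then $\min_{x \in \partial D}(|p-x| + |x - (p'+s\omega)|) = c - s$. -/

import Mathlib

open RealInnerProductSpace

/-- If `c` is the minimum of `‖p-x‖+‖x-p'‖` over `∂D`, `c > ‖p-p'‖`, `ω` is a unit vector,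
`0 < s < s(ω)` where `s(ω) = (c²-‖p-p'‖²)/(2(c-ω·(p-p')))`, and `p' + s(ω)ω ∈ ∂D`, then
the minimum of `‖p-x‖+‖x-(p'+sω)‖` over `∂D` equals `c - s`. -/
theorem stmt7 (D : Set (EuclideanSpace ℝ (Fin 3))) (p p' ω : EuclideanSpace ℝ (Fin 3))
    (c s : ℝ)
    (hD : D.Nonempty) (hDo : IsOpen D) (hDb : Bornology.IsBounded D)
    (hp : p ∉ closure D) (hp' : p' ∉ closure D)
    (hc : IsLeast {r : ℝ | ∃ x ∈ frontier D, r = ‖p - x‖ + ‖x - p'‖} c)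
    (hcpp' : ‖p - p'‖ < c) (hω : ‖ω‖ = 1)
    (hs : 0 < s) (hss : s < (c ^ 2 - ‖p - p'‖ ^ 2) / (2 * (c - (inner ℝ (ω) (p - p') : ℝ))))
    (hq : p' + ((c ^ 2 - ‖p - p'‖ ^ 2) / (2 * (c - (inner ℝ (ω) (p - p') : ℝ)))) • ω ∈ frontier D) :
    IsLeast {r : ℝ | ∃ x ∈ frontier D, r = ‖p - x‖ + ‖x - (p' + s • ω)‖} (c - s) := by
  set a : ℝ := inner ℝ ω (p - p') with ha
  set v := p - p' with hv
  set s0 : ℝ := (c ^ 2 - ‖v‖ ^ 2) / (2 * (c - a)) with hs0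
  have hnn : (0:ℝ) ≤ ‖v‖ := norm_nonneg _
  have habs : |a| ≤ ‖v‖ := by
    have := abs_real_inner_le_norm ω v
    rwa [hω, one_mul] at this
  have ha' : a ≤ ‖v‖ := (abs_le.mp habs).2
  have hd : 0 < c - a := by linarith
  have hnum : 0 < c ^ 2 - ‖v‖ ^ 2 := by nlinarith
  have hs0pos : 0 < s0 := div_pos hnum (by linarith)
  have hs0c : s0 ≤ c := by
    rw [hs0, div_le_iff₀ (by linarith)]
    nlinarith [sq_nonneg (c - a), sq_abs a]
  have hkey : s0 * (2 * (c - a)) = c ^ 2 - ‖v‖ ^ 2 := by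
    rw [hs0]; exact div_mul_cancel₀ _ (ne_of_gt (by linarith))
  have hnormq : ‖p - (p' + s0 • ω)‖ = c - s0 := by
    have h1 : p - (p' + s0 • ω) = v - s0 • ω := by rw [hv]; abel
    have h2 : ‖v - s0 • ω‖ ^ 2 = (c - s0) ^ 2 := by
      rw [norm_sub_sq_real, real_inner_smul_right, norm_smul, Real.norm_eq_abs,
        abs_of_pos hs0pos, hω, mul_one, real_inner_comm]
      rw [← ha]
      nlinarith [hkey]
    rw [h1]
    nlinarith [norm_nonneg (v - s0 • ω), sq_nonneg (‖v - s0 • ω‖ - (c - s0)), hs0c]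
  constructor
  · refine ⟨p' + s0 • ω, hq, ?_⟩
    have h3 : p' + s0 • ω - (p' + s • ω) = (s0 - s) • ω := by
      rw [sub_smul]; abel
    rw [hnormq, h3, norm_smul, Real.norm_eq_abs, hω, mul_one,
      abs_of_pos (by rw [hs0] at hss ⊢; linarith)]
    ring
  · rintro r ⟨x, hx, rfl⟩
    have hcx : c ≤ ‖p - x‖ + ‖x - p'‖ := hc.2 ⟨x, hx, rfl⟩
    have h4 : ‖x - p'‖ ≤ ‖x - (p' + s • ω)‖ + s := by
      have : x - p' = (x - (p' + s • ω)) + s • ω := by abel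
      calc ‖x - p'‖ = ‖(x - (p' + s • ω)) + s • ω‖ := by rw [← this]
        _ ≤ ‖x - (p' + s • ω)‖ + ‖s • ω‖ := norm_add_le _ _
        _ = ‖x - (p' + s • ω)‖ + s := by
            rw [norm_smul, Real.norm_eq_abs, hω, mul_one, abs_of_pos hs]
    linarith
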